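/- Let r_1 < r_2 < r_3 and s_1 < s_2 in I (lexicographic order), and suppose A_t(r_1, s_1) = A_t(r_1, s_2) = A_t(r_2, s_2) = A_t(r_3, s_1) = 1. Then it is not possible that type(s_1, s_2) = type(r_1, r_3) and type(r_1, r_3) = type(r_1, r_2). -/
import Mathlib


/-- `⟨j_1,…,j_m⟩ = 1 + Σ_{i=1}^m (j_i−1)·k^{m−i}`, the injection `[k]^m → [k^m]`. -/
def ang (k : ℕ) (l : List ℕ) : ℕ := l.foldl (fun acc j => acc * k + (j - 1)) 0 + 1

/-- The vector `v[j_1,…,j_t]`, given by a function `js : ℕ → ℕ` with `js r` being `j_{r+1}`.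
Coordinates are flattened: flat coordinate `i` is coordinate `i % k` (0-indexed) of
block `i / k` (0-indexed).  It is 0 everywhere except at coordinate `j_r` (1-indexed) of
block `r` (1-indexed), where it equals `⟨j_1,…,j_{r−1}⟩`. -/
def vVec (k : ℕ) (js : ℕ → ℕ) (i : ℕ) : ℤ :=
  if i % k + 1 = js (i / k) then (ang k ((List.range (i / k)).map js) : ℤ) else 0

/-- Membership in `I = {1,…,k^t}^{tk}`. -/
def memI (t k : ℕ) (a : Fin (t * k) → ℕ) : Prop := ∀ i, 1 ≤ a i ∧ a i ≤ k ^ t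

/-- Lexicographic (strict) order on tuples. -/
def lexLt {N : ℕ} (a b : Fin N → ℕ) : Prop :=
  ∃ i : Fin N, (∀ j, j < i → a j = b j) ∧ a i < b i

/-- `js` codes an element `(j_1,…,j_t) ∈ [k]^t`. -/
def validJs (t k : ℕ) (js : ℕ → ℕ) : Prop := ∀ r, r < t → 1 ≤ js r ∧ js r ≤ k

/-- The entry `A_t(a,b)` is 1 iff `b − a ∈ S`, i.e. `b − a = v[j_1,…,j_t]` for some
`(j_1,…,j_t) ∈ [k]^t`. -/
def AtOne (t k : ℕ) (a b : Fin (t * k) → ℕ) : Prop :=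
  ∃ js : ℕ → ℕ, validJs t k js ∧
    ∀ i : Fin (t * k), (b i : ℤ) - (a i : ℤ) = vVec k js i.val

/-- `typeOf a b` is the (1-indexed) first block where `a` and `b` differ. -/
noncomputable def typeOf (t k : ℕ) (a b : Fin (t * k) → ℕ) : ℕ :=
  sInf {r | ∃ i : Fin (t * k), i.val / k + 1 = r ∧ a i ≠ b i}

lemma ang_pos (k : ℕ) (l : List ℕ) : 0 < ang k l := Nat.succ_pos _

lemma divmod_div (k p q : ℕ) (hk : 0 < k) (hq : q < k) : (p * k + q) / k = p := by
  rw [Nat.mul_comm, Nat.mul_add_div hk, Nat.div_eq_of_lt hq]; omega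

lemma divmod_mod (k p q : ℕ) (hq : q < k) : (p * k + q) % k = q := by
  rw [Nat.mul_comm, Nat.mul_add_mod, Nat.mod_eq_of_lt hq]

lemma coord_split (k p q d m : ℕ) (hq : q < k) (hm : m < k)
    (h : d * k + m < p * k + q) : d < p ∨ (d = p ∧ m < q) := by
  rcases Nat.lt_trichotomy d p with h' | h' | h'
  · exact Or.inl h'
  · subst h'; right; exact ⟨rfl, by omega⟩
  · exfalso
    have h2 : (p + 1) * k ≤ d * k := Nat.mul_le_mul_right k h'
    have h3 : p * k + q < d * k + m := by
      have : (p + 1) * k = p * k + k := by ring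
      omega
    exact lt_asymm h h3

lemma vVec_congr (k : ℕ) (js js' : ℕ → ℕ) (i : ℕ) (h : ∀ r, r ≤ i / k → js r = js' r) :
    vVec k js i = vVec k js' i := by
  have h1 : js (i / k) = js' (i / k) := h _ le_rfl
  have h2 : (List.range (i / k)).map js = (List.range (i / k)).map js' :=
    List.map_congr_left (fun a ha => h a (le_of_lt (List.mem_range.mp ha)))
  simp [vVec, h1, h2]

lemma lexLt_le {N : ℕ} (a b : Fin N → ℕ) (h : lexLt a b) (i₀ : Fin N)
    (he : ∀ j, j < i₀ → a j = b j) : a i₀ ≤ b i₀ := by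
  obtain ⟨i, hlt, hi⟩ := h
  rcases lt_trichotomy i i₀ with h' | h' | h'
  · exact absurd (he i h') (Nat.ne_of_lt hi)
  · exact h' ▸ le_of_lt hi
  · exact le_of_eq (hlt i₀ h')

lemma lexLt_trans {N : ℕ} {a b c : Fin N → ℕ} (h1 : lexLt a b) (h2 : lexLt b c) :
    lexLt a c := by
  obtain ⟨i, hi, hi'⟩ := h1
  obtain ⟨i', hj, hj'⟩ := h2
  rcases lt_trichotomy i i' with h' | h' | h'
  · exact ⟨i, fun j hji => (hi j hji).trans (hj j (hji.trans h')), lt_of_lt_of_le hi' (le_of_eq (hj i h'))⟩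
  · exact ⟨i, fun j hji => (hi j hji).trans (hj j (h' ▸ hji)), lt_trans hi' (h' ▸ hj')⟩
  · exact ⟨i', fun j hji => (hi j (hji.trans h')).trans (hj j hji), lt_of_le_of_lt (le_of_eq (hi i' h')) hj'⟩

lemma js_prefix_eq (k p : ℕ) (js js' : ℕ → ℕ)
    (hv : ∀ r, r < p → 1 ≤ js r ∧ js r ≤ k)
    (h : ∀ i : ℕ, i / k < p → vVec k js i = vVec k js' i) :
    ∀ r, r < p → js r = js' r := by
  intro r
  induction r using Nat.strong_induction_on with
  | _ r ih =>
    intro hr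
    have hk : 0 < k := lt_of_lt_of_le (hv r hr).1 (hv r hr).2
    have hb := hv r hr
    have hq : js r - 1 < k := by omega
    set i := r * k + (js r - 1) with hi
    have hdiv : i / k = r := divmod_div k r (js r - 1) hk hq
    have hmod : i % k = js r - 1 := divmod_mod k r (js r - 1) hq
    have hcond : i % k + 1 = js (i / k) := by rw [hdiv, hmod]; omega
    have hval : vVec k js i = (ang k ((List.range r).map js) : ℤ) := by
      rw [vVec, if_pos hcond, hdiv]
    have heq := h i (by rw [hdiv]; exact hr)
    have hne : vVec k js' i ≠ 0 := by
      rw [← heq, hval]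
      exact_mod_cast (ang_pos k ((List.range r).map js)).ne'
    have hcond' : i % k + 1 = js' (i / k) := by
      by_contra hc
      exact hne (by rw [vVec, if_neg hc])
    rw [hdiv] at hcond hcond'
    omega

lemma type_spec (t k : ℕ) (hk : 0 < k) (a b : Fin (t * k) → ℕ) (h : lexLt a b) :
    ∃ p, p < t ∧ typeOf t k a b = p + 1 ∧
      (∀ i : Fin (t * k), i.val / k < p → a i = b i) ∧
      (∃ i : Fin (t * k), i.val / k = p ∧ a i ≠ b i) := by
  set S := {r | ∃ i : Fin (t * k), i.val / k + 1 = r ∧ a i ≠ b i} with hS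
  obtain ⟨i₀, -, hi₀⟩ := h
  have hne : S.Nonempty := ⟨i₀.val / k + 1, i₀, rfl, Nat.ne_of_lt hi₀⟩
  have hmem : sInf S ∈ S := Nat.sInf_mem hne
  obtain ⟨i, hi, hab⟩ := hmem
  refine ⟨i.val / k, ?_, ?_, ?_, ⟨i, rfl, hab⟩⟩
  · exact Nat.div_lt_of_lt_mul (Nat.mul_comm t k ▸ i.isLt)
  · exact hi.symm
  · intro i' hi'
    by_contra hne'
    have : i'.val / k + 1 ∈ S := ⟨i', rfl, hne'⟩
    have := Nat.sInf_le this
    omega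

lemma lt_tk (t k i : ℕ) (hk : 0 < k) (h : i / k < t) : i < t * k := by
  calc i = k * (i / k) + i % k := (Nat.div_add_mod i k).symm
    _ < k * (i / k) + k := Nat.add_lt_add_left (Nat.mod_lt i hk) _
    _ = k * (i / k + 1) := by ring
    _ ≤ k * t := Nat.mul_le_mul_left k h
    _ = t * k := Nat.mul_comm k t

/-- Key pair analysis: if `b - a = v' - v` with common type block `p`, then
`js` and `js'` agree below `p`, differ at `p`, and `js' p < js p`. -/
lemma pair_js (t k p : ℕ) (hp : p < t)
    (a b : Fin (t * k) → ℕ) (js js' : ℕ → ℕ)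
    (hv : ∀ r, r < t → 1 ≤ js r ∧ js r ≤ k)
    (hv' : ∀ r, r < t → 1 ≤ js' r ∧ js' r ≤ k)
    (hd : ∀ i : Fin (t * k), (b i : ℤ) - (a i : ℤ) = vVec k js' i.val - vVec k js i.val)
    (hblocks : ∀ i : Fin (t * k), i.val / k < p → a i = b i)
    (hne : ∃ i : Fin (t * k), i.val / k = p ∧ a i ≠ b i)
    (hlex : lexLt a b) :
    (∀ r, r < p → js r = js' r) ∧ js' p ≠ js p ∧ js' p < js p := by
  have hk : 0 < k := lt_of_lt_of_le (hv 0 (by omega)).1 (hv 0 (by omega)).2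
  -- prefix equality
  have hpre : ∀ r, r < p → js r = js' r := by
    apply js_prefix_eq k p js js' (fun r hr => hv r (hr.trans hp))
    intro i hik
    have hilt : i < t * k := lt_tk t k i hk (hik.trans hp)
    have this2 : (b ⟨i, hilt⟩ : ℤ) - (a ⟨i, hilt⟩ : ℤ) = vVec k js' i - vVec k js i :=
      hd ⟨i, hilt⟩
    have h0 : a ⟨i, hilt⟩ = b ⟨i, hilt⟩ := hblocks ⟨i, hilt⟩ hik
    rw [h0] at this2
    omega
  -- differ at p
  have hdiff : js' p ≠ js p := by
    intro hEq
    obtain ⟨i, hip, hab⟩ := hne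
    have : vVec k js i.val = vVec k js' i.val := by
      apply vVec_congr
      intro r hr
      rw [hip] at hr
      rcases Nat.lt_or_ge r p with h' | h'
      · exact hpre r h'
      · have : r = p := le_antisymm hr h'
        rw [this, hEq]
    have := hd i
    omega
  refine ⟨hpre, hdiff, ?_⟩
  by_contra hge
  have hlt : js p < js' p := by
    rcases Nat.lt_or_ge (js' p) (js p) with h' | h'
    · exact absurd h' hge
    · exact lt_of_le_of_ne h' (Ne.symm hdiff)
  -- i₀ = p*k + (js p - 1)
  have hbp := hv p hp
  have hq : js p - 1 < k := by omega
  have hi₀lt : p * k + (js p - 1) < t * k := by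
    have : (p + 1) * k ≤ t * k := Nat.mul_le_mul_right k (by omega)
    have : p * k + k ≤ t * k := by linarith [this, (by ring : (p+1)*k = p*k + k)]
    omega
  set i₀ : Fin (t * k) := ⟨p * k + (js p - 1), hi₀lt⟩ with hi₀
  have hdiv : i₀.val / k = p := divmod_div k p (js p - 1) hk hq
  have hmod : i₀.val % k = js p - 1 := divmod_mod k p (js p - 1) hq
  -- all coordinates before i₀ agree
  have hbefore : ∀ j, j < i₀ → a j = b j := by
    intro j hj
    have hjval : j.val < p * k + (js p - 1) := hj
    have hjd : j.val / k * k + j.val % k = j.val := by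
      rw [Nat.mul_comm]; exact Nat.div_add_mod j.val k
    have hsplit := coord_split k p (js p - 1) (j.val / k) (j.val % k) hq
      (Nat.mod_lt _ hk) (by rw [hjd]; exact hjval)
    rcases hsplit with h' | ⟨h1, h2⟩
    · exact hblocks j h'
    · have hz : vVec k js j.val = 0 := by
        rw [vVec, if_neg]; rw [h1]; omega
      have hz' : vVec k js' j.val = 0 := by
        rw [vVec, if_neg]; rw [h1]; omega
      have := hd j
      rw [hz, hz'] at this
      omega
  have hle := lexLt_le a b hlex i₀ hbefore
  have hdi := hd i₀
  have hcond : i₀.val % k + 1 = js (i₀.val / k) := by rw [hdiv, hmod]; omega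
  have hv0 : vVec k js i₀.val = (ang k ((List.range p).map js) : ℤ) := by
    rw [vVec, if_pos hcond, hdiv]
  have hv'0 : vVec k js' i₀.val = 0 := by
    rw [vVec, if_neg]; rw [hdiv, hmod]; omega
  have hap := ang_pos k ((List.range p).map js)
  rw [hv0, hv'0] at hdi
  omega

/-- If `r₁ < r₂ < r₃`, `s₁ < s₂` and
`A_t(r₁,s₁) = A_t(r₁,s₂) = A_t(r₂,s₂) = A_t(r₃,s₁) = 1`, then it is impossible that
`type(s₁,s₂) = type(r₁,r₃) = type(r₁,r₂)`. -/
theorem stmt10 (t k : ℕ) (ht : 2 ≤ t) (hk : 2 ≤ k)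
    (r₁ r₂ r₃ s₁ s₂ : Fin (t * k) → ℕ)
    (h1 : memI t k r₁) (h2 : memI t k r₂) (h3 : memI t k r₃)
    (hs1 : memI t k s₁) (hs2 : memI t k s₂)
    (h12 : lexLt r₁ r₂) (h23 : lexLt r₂ r₃) (hs12 : lexLt s₁ s₂)
    (e1 : AtOne t k r₁ s₁) (e2 : AtOne t k r₁ s₂)
    (e3 : AtOne t k r₂ s₂) (e4 : AtOne t k r₃ s₁) :
    ¬ (typeOf t k s₁ s₂ = typeOf t k r₁ r₃ ∧
       typeOf t k r₁ r₃ = typeOf t k r₁ r₂) := by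

  rintro ⟨hA, hB⟩
  have hk0 : 0 < k := by omega
  obtain ⟨j1, v1, d1⟩ := e1
  obtain ⟨j2, v2, d2⟩ := e2
  obtain ⟨j3, v3, d3⟩ := e3
  obtain ⟨j4, v4, d4⟩ := e4
  have h13 : lexLt r₁ r₃ := lexLt_trans h12 h23
  obtain ⟨p, hp, hts, hbs, hns⟩ := type_spec t k hk0 s₁ s₂ hs12
  obtain ⟨p13, hp13, ht13, hb13, hn13⟩ := type_spec t k hk0 r₁ r₃ h13
  obtain ⟨p12, hp12, ht12, hb12, hn12⟩ := type_spec t k hk0 r₁ r₂ h12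
  have hpe : p13 = p := by rw [hts, ht13] at hA; omega
  have hpe2 : p12 = p := by rw [ht13, ht12] at hB; omega
  rw [hpe] at hp13 hb13 hn13
  rw [hpe2] at hp12 hb12 hn12
  -- pair (s₁, s₂) with vectors j1, j2
  have hdS : ∀ i : Fin (t * k), (s₂ i : ℤ) - (s₁ i : ℤ) = vVec k j2 i.val - vVec k j1 i.val := by
    intro i; have := d1 i; have := d2 i; omega
  obtain ⟨preS, neS, ltS⟩ := pair_js t k p hp s₁ s₂ j1 j2 v1 v2 hdS hbs hns hs12
  -- pair (r₁, r₃) with vectors j4, j1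
  have hd13 : ∀ i : Fin (t * k), (r₃ i : ℤ) - (r₁ i : ℤ) = vVec k j1 i.val - vVec k j4 i.val := by
    intro i; have := d1 i; have := d4 i; omega
  obtain ⟨pre13, ne13, lt13⟩ := pair_js t k p hp r₁ r₃ j4 j1 v4 v1 hd13 hb13 hn13 h13
  -- pair (r₁, r₂) with vectors j3, j2
  have hd12 : ∀ i : Fin (t * k), (r₂ i : ℤ) - (r₁ i : ℤ) = vVec k j2 i.val - vVec k j3 i.val := by
    intro i; have := d2 i; have := d3 i; omega
  obtain ⟨pre12, ne12, lt12⟩ := pair_js t k p hp r₁ r₂ j3 j2 v3 v2 hd12 hb12 hn12 h12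
  -- now: j2 p < j1 p < j4 p and j2 p < j3 p
  have hbp := v2 p hp
  have hq : j2 p - 1 < k := by omega
  have hi₀lt : p * k + (j2 p - 1) < t * k := by
    have h5 : (p + 1) * k ≤ t * k := Nat.mul_le_mul_right k hp
    have h6 : p * k + k ≤ t * k := by linarith [(by ring : (p + 1) * k = p * k + k)]
    omega
  set i₀ : Fin (t * k) := ⟨p * k + (j2 p - 1), hi₀lt⟩ with hi₀
  have hdiv : i₀.val / k = p := divmod_div k p (j2 p - 1) hk0 hq
  have hmod : i₀.val % k = j2 p - 1 := divmod_mod k p (j2 p - 1) hq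
  have hbefore : ∀ j, j < i₀ → r₂ j = r₃ j := by
    intro j hj
    have hjval : j.val < p * k + (j2 p - 1) := hj
    have hjd : j.val / k * k + j.val % k = j.val := by
      rw [Nat.mul_comm]; exact Nat.div_add_mod j.val k
    have hsplit := coord_split k p (j2 p - 1) (j.val / k) (j.val % k) hq
      (Nat.mod_lt _ hk0) (by rw [hjd]; exact hjval)
    have hh1 := d1 j
    have hh2 := d2 j
    have hh3 := d3 j
    have hh4 := d4 j
    rcases hsplit with h' | ⟨hb1, hb2⟩
    · have hc1 : vVec k j1 j.val = vVec k j2 j.val :=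
        vVec_congr k j1 j2 j.val (fun r hr => preS r (lt_of_le_of_lt hr h'))
      have hc2 : vVec k j4 j.val = vVec k j1 j.val :=
        vVec_congr k j4 j1 j.val (fun r hr => pre13 r (lt_of_le_of_lt hr h'))
      have hc3 : vVec k j3 j.val = vVec k j2 j.val :=
        vVec_congr k j3 j2 j.val (fun r hr => pre12 r (lt_of_le_of_lt hr h'))
      omega
    · have hz1 : vVec k j1 j.val = 0 := by
        rw [vVec, if_neg]; rw [hb1]; omega
      have hz2 : vVec k j2 j.val = 0 := by
        rw [vVec, if_neg]; rw [hb1]; omega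
      have hz3 : vVec k j3 j.val = 0 := by
        rw [vVec, if_neg]; rw [hb1]; omega
      have hz4 : vVec k j4 j.val = 0 := by
        rw [vVec, if_neg]; rw [hb1]; omega
      omega
  have hle := lexLt_le r₂ r₃ h23 i₀ hbefore
  have hcond : i₀.val % k + 1 = j2 (i₀.val / k) := by rw [hdiv, hmod]; omega
  have hv2' : vVec k j2 i₀.val = (ang k ((List.range p).map j2) : ℤ) := by
    rw [vVec, if_pos hcond, hdiv]
  have hz1 : vVec k j1 i₀.val = 0 := by
    rw [vVec, if_neg]; rw [hdiv, hmod]; omega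
  have hz3 : vVec k j3 i₀.val = 0 := by
    rw [vVec, if_neg]; rw [hdiv, hmod]; omega
  have hz4 : vVec k j4 i₀.val = 0 := by
    rw [vVec, if_neg]; rw [hdiv, hmod]; omega
  have hap := ang_pos k ((List.range p).map j2)
  have hh1 := d1 i₀
  have hh2 := d2 i₀
  have hh3 := d3 i₀
  have hh4 := d4 i₀
  omega
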